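/- Let T ⊆ ℕ₀^d be a nonordinary GNS with corner c, ≺ a monomial order on ℕ₀^d, and x = min_≺(L(T) \ {0}) where L(T) = {y ∈ T : y ≤ c − 1}. Then x is a minimal generator of T and T \ {x} is a GNS with corner c. -/
import Mathlib


open scoped BigOperators

/-- A generalized numerical semigroup (GNS): a submonoid of ℕ₀^d with finite complement. -/
def IsGNS {d : ℕ} (S : Set (Fin d → ℕ)) : Prop :=
  0 ∈ S ∧ (∀ x ∈ S, ∀ y ∈ S, x + y ∈ S) ∧ Sᶜ.Finite

/-- `c` is a corner of `S`: (1) any tuple whose i-th coordinate is ≥ c i lies in S;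
(2) for each i with c i ≥ 1 there is a tuple with i-th coordinate c i − 1 outside S. -/
def IsCornerOf {d : ℕ} (S : Set (Fin d → ℕ)) (c : Fin d → ℕ) : Prop :=
  c ∈ S ∧
  (∀ i : Fin d, ∀ x : Fin d → ℕ, c i ≤ x i → x ∈ S) ∧
  (∀ i : Fin d, c i = 0 ∨ ∃ x : Fin d → ℕ, x i + 1 = c i ∧ x ∉ S)

theorem remove_low_of_nonordinary {d : ℕ} (T : Set (Fin d → ℕ)) (c x : Fin d → ℕ)
    (prec : (Fin d → ℕ) → (Fin d → ℕ) → Prop)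
    (htotal : ∀ a b, a ≠ b → prec a b ∨ prec b a)
    (hirr : ∀ a, ¬ prec a a)
    (htrans : ∀ a b e, prec a b → prec b e → prec a e)
    (hadd : ∀ a b g, prec a b → prec (a + g) (b + g))
    (hzero : ∀ a : Fin d → ℕ, a ≠ 0 → prec 0 a)
    (hT : IsGNS T) (hc : IsCornerOf T c)
    (hxT : x ∈ T) (hxc : ∀ i, x i + 1 ≤ c i) (hx0 : x ≠ 0)
    (hxmin : ∀ y ∈ T, (∀ i, y i + 1 ≤ c i) → y ≠ 0 → y ≠ x → prec x y) :
    (¬ ∃ a ∈ T, ∃ b ∈ T, a ≠ 0 ∧ b ≠ 0 ∧ x = a + b) ∧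
      IsGNS (T \ {x}) ∧ IsCornerOf (T \ {x}) c := by
  obtain ⟨h0, hAdd, hFin⟩ := hT
  obtain ⟨hcT, hc2, hc3⟩ := hc
  have part1 : ¬ ∃ a ∈ T, ∃ b ∈ T, a ≠ 0 ∧ b ≠ 0 ∧ x = a + b := by
    rintro ⟨a, ha, b, hb, ha0, hb0, hab⟩
    have hax : a ≠ x := by
      rintro rfl
      apply hb0
      funext i
      have := congrFun hab i
      simp [Pi.add_apply] at this
      simpa using this
    have hac : ∀ i, a i + 1 ≤ c i := fun i => by
      have h1 := congrFun hab i
      have h2 := hxc i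
      simp [Pi.add_apply] at h1
      omega
    have hpa : prec x a := hxmin a ha hac ha0 hax
    have hpb : prec a x := by
      have := hadd 0 b a (hzero b hb0)
      simpa [zero_add, add_comm b a, ← hab] using this
    exact hirr x (htrans x a x hpa hpb)
  refine ⟨part1, ⟨⟨h0, hx0.symm⟩, ?_, ?_⟩, ?_⟩
  · rintro a ⟨ha, hax⟩ b ⟨hb, hbx⟩
    refine ⟨hAdd a ha b hb, ?_⟩
    intro hsum
    simp only [Set.mem_singleton_iff] at hsum hax hbx
    by_cases ha0 : a = 0
    · exact hbx (by simpa [ha0] using hsum)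
    by_cases hb0 : b = 0
    · exact hax (by simpa [hb0] using hsum)
    exact part1 ⟨a, ha, b, hb, ha0, hb0, hsum.symm⟩
  · have : (T \ {x})ᶜ = Tᶜ ∪ {x} := by
      ext y
      simp only [Set.mem_compl_iff, Set.mem_diff, Set.mem_union, Set.mem_singleton_iff]
      tauto
    rw [this]
    exact hFin.union (Set.finite_singleton x)
  · have hi : ∃ i, x i ≠ 0 := Function.ne_iff.mp hx0
    obtain ⟨i0, _⟩ := hi
    have hcx : c ≠ x := by
      intro h
      have := hxc i0
      rw [h] at this
      omega
    refine ⟨⟨hcT, fun h => hcx h⟩, ?_, ?_⟩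
    · intro i y hy
      refine ⟨hc2 i y hy, ?_⟩
      intro h
      have hx' := hxc i
      simp only [Set.mem_singleton_iff] at h
      subst h
      omega
    · intro i
      rcases hc3 i with h | ⟨y, hy1, hy2⟩
      · exact Or.inl h
      · exact Or.inr ⟨y, hy1, fun h => hy2 h.1⟩
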